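/- Let H be a linear subspace of ℝ^n of dimension at most d, where d ≤ n. Then H contains at most 2^d vectors all of whose coordinates lie in {0,1}; that is, |H ∩ {0,1}^n| ≤ 2^d. -/
import Mathlib


/-- A linear subspace of `ℝ^n` of dimension at most `d ≤ n` contains at most `2^d` vectors
all of whose coordinates lie in `{0,1}`. -/
theorem subspace_card_zero_one_vectors (n d : ℕ) (hdn : d ≤ n)
    (H : Submodule ℝ (Fin n → ℝ)) (hH : Module.finrank ℝ H ≤ d) :
    Set.ncard {v : Fin n → ℝ | v ∈ H ∧ ∀ i, v i = 0 ∨ v i = 1} ≤ 2 ^ d := by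
  classical
  set S : Set (Fin n → ℝ) := {v : Fin n → ℝ | v ∈ H ∧ ∀ i, v i = 0 ∨ v i = 1} with hS
  -- coordinate functionals restricted to H
  set f : Fin n → Module.Dual ℝ H := fun i => (LinearMap.proj i).comp H.subtype with hf
  obtain ⟨t, hts, hspan, hli⟩ := exists_linearIndependent ℝ (Set.range f)
  have htfin : t.Finite := Set.finite_coe_iff.mp hli.finite
  haveI : Fintype t := htfin.fintype
  have hcardt : Fintype.card t ≤ d := by
    have := hli.fintype_card_le_finrank
    rw [Subspace.dual_finrank_eq] at this
    exact this.trans hH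
  have hrange : ∀ i, f i ∈ Submodule.span ℝ t := by
    rw [hspan]; exact fun i => Submodule.subset_span ⟨i, rfl⟩
  -- the injection into t → Prop
  set φ : S → (t → Prop) := fun x ψ => ((ψ : Module.Dual ℝ H) ⟨x.1, x.2.1⟩ : ℝ) = 1 with hφ
  have hinj : Function.Injective φ := by
    intro x y hxy
    set x' : H := ⟨x.1, x.2.1⟩ with hx'
    set y' : H := ⟨y.1, y.2.1⟩ with hy'
    have hxy' : ∀ ψ : t, (ψ : Module.Dual ℝ H) x' = (ψ : Module.Dual ℝ H) y' := by
      intro ψ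
      obtain ⟨i, hi⟩ := hts ψ.2
      have hP : (((ψ : Module.Dual ℝ H) x' : ℝ) = 1) = (((ψ : Module.Dual ℝ H) y' : ℝ) = 1) :=
        congrFun hxy ψ
      have hxv : ((ψ : Module.Dual ℝ H) x' : ℝ) = x.1 i := by rw [← hi]; rfl
      have hyv : ((ψ : Module.Dual ℝ H) y' : ℝ) = y.1 i := by rw [← hi]; rfl
      rw [hxv, hyv]
      rw [hxv, hyv] at hP
      rcases x.2.2 i with h0 | h1 <;> rcases y.2.2 i with g0 | g1
      · rw [h0, g0]
      · exfalso; rw [h0, g1] at hP; exact (zero_ne_one (hP.mpr rfl))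
      · exfalso; rw [h1, g0] at hP; exact (zero_ne_one (hP.mp rfl))
      · rw [h1, g1]
    -- eval difference functional
    set g : Module.Dual ℝ (Module.Dual ℝ H) :=
      Module.Dual.eval ℝ H x' - Module.Dual.eval ℝ H y' with hg
    have hker : Submodule.span ℝ t ≤ LinearMap.ker g := by
      rw [Submodule.span_le]
      intro ψ hψ
      simp only [SetLike.mem_coe, LinearMap.mem_ker, hg, LinearMap.sub_apply,
        Module.Dual.eval_apply]
      exact sub_eq_zero.mpr (hxy' ⟨ψ, hψ⟩)
    have hall : ∀ i, x.1 i = y.1 i := by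
      intro i
      have hmem := hker (hrange i)
      rw [LinearMap.mem_ker, hg, LinearMap.sub_apply, Module.Dual.eval_apply,
        Module.Dual.eval_apply] at hmem
      have := sub_eq_zero.mp hmem
      have hxv : (f i) x' = x.1 i := rfl
      have hyv : (f i) y' = y.1 i := rfl
      rw [hxv, hyv] at this
      exact this
    exact Subtype.ext (funext hall)
  have h1 : Set.ncard S = Nat.card S := (Nat.card_coe_set_eq S).symm
  have h2 : Nat.card S ≤ Nat.card (t → Prop) := Nat.card_le_card_of_injective φ hinj
  have h3 : Nat.card (t → Prop) = 2 ^ Fintype.card t := by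
    rw [Nat.card_eq_fintype_card, Fintype.card_fun]
    norm_num
  calc Set.ncard S = Nat.card S := h1
    _ ≤ Nat.card (t → Prop) := h2
    _ = 2 ^ Fintype.card t := h3
    _ ≤ 2 ^ d := Nat.pow_le_pow_right (by norm_num) hcardt
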